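/- Let φ, ψ be structural sets and α, β real with α ≠ 0 and α² ≠ β². If u is a C³ function from an open set Ω ⊆ ℝ³ to ℝ_{0,3} that is harmonic (Δu = 0) or (φ,ψ)-inframonogenic (φ∂ u ψ∂ = 0), then w = u ψ∂ − (β/α) ψ∂ u satisfies the generalized Lamé–Navier system α(φ∂ w ψ∂) + β(φ∂ ψ∂ w) = 0 in Ω. -/

import Mathlib

noncomputable section

abbrev V3 : Type := Fin 3 → ℝ

/-- The negative-definite quadratic form on `ℝ³`, so that `CliffordAlgebra Q3 = ℝ_{0,3}`. -/
def Q3 : QuadraticForm ℝ V3 := -(QuadraticMap.weightedSumSquares ℝ (fun _ : Fin 3 => (1:ℝ)))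

/-- The real Clifford algebra `ℝ_{0,3}`. -/
abbrev Cl3 : Type := CliffordAlgebra Q3

namespace Cl3

def bCl : Module.Basis (Module.Free.ChooseBasisIndex ℝ Cl3) ℝ Cl3 := Module.Free.chooseBasis ℝ Cl3

def toLp : Cl3 →ₗ[ℝ] lp (fun _ : Module.Free.ChooseBasisIndex ℝ Cl3 => ℝ) ⊤ where
  toFun x := ⟨fun i => bCl.repr x i, by
    apply memℓp_infty
    have h1 : (Set.range ((bCl.repr x) : _ → ℝ)).Finite := by
      apply Set.Finite.subset (((bCl.repr x).frange : Finset ℝ).finite_toSet.insert 0)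
      rintro y ⟨i, rfl⟩
      by_cases h : (bCl.repr x) i = 0
      · simp [h]
      · exact Set.mem_insert_of_mem _ (by
          simp only [Finset.mem_coe, Finsupp.mem_frange]
          exact ⟨h, i, rfl⟩)
    have h2 : (Set.range fun i => ‖(bCl.repr x) i‖).Finite := by
      have := h1.image norm
      apply this.subset
      rintro y ⟨i, rfl⟩
      exact ⟨(bCl.repr x) i, ⟨i, rfl⟩, rfl⟩
    exact h2.bddAbove⟩
  map_add' x y := by ext i; simp; rfl
  map_smul' c x := by ext i; simp

lemma toLp_injective : Function.Injective toLp := by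
  intro x y h
  apply bCl.repr.injective
  ext i
  exact congrFun (congrArg Subtype.val h) i

instance : NormedAddCommGroup Cl3 := NormedAddCommGroup.induced Cl3 _ toLp toLp_injective
instance : NormedSpace ℝ Cl3 := NormedSpace.induced ℝ Cl3 _ toLp

end Cl3

/-- Embedding of vectors `ℝ³ ⊂ ℝ_{0,3}`. -/
def ι3 : V3 →ₗ[ℝ] Cl3 := CliffordAlgebra.ι Q3

/-- `ψ` is a structural set: `ψⁱψʲ + ψʲψⁱ = -2δᵢⱼ` inside `ℝ_{0,3}`. -/
def StructuralSet (ψ : Fin 3 → V3) : Prop :=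
  ∀ i j, ι3 (ψ i) * ι3 (ψ j) + ι3 (ψ j) * ι3 (ψ i)
      = algebraMap ℝ Cl3 (if i = j then -2 else 0)

/-- Partial derivative `∂f/∂xᵢ`. -/
def pd (i : Fin 3) (f : V3 → Cl3) : V3 → Cl3 := fun x => fderiv ℝ f x (Pi.single i 1)

/-- Left Dirac operator `ψ∂ f = Σᵢ ψⁱ ∂f/∂xᵢ`. -/
def DL (ψ : Fin 3 → V3) (f : V3 → Cl3) : V3 → Cl3 := fun x => ∑ i, ι3 (ψ i) * pd i f x

/-- Right Dirac operator `f ψ∂ = Σᵢ (∂f/∂xᵢ) ψⁱ`. -/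
def DR (ψ : Fin 3 → V3) (f : V3 → Cl3) : V3 → Cl3 := fun x => ∑ i, pd i f x * ι3 (ψ i)

/-- Two-sided operator `φ∂ f ψ∂ = Σᵢⱼ φⁱ (∂²f/∂xᵢ∂xⱼ) ψʲ`. -/
def DLR (φ ψ : Fin 3 → V3) (f : V3 → Cl3) : V3 → Cl3 :=
  fun x => ∑ i, ∑ j, ι3 (φ i) * pd i (pd j f) x * ι3 (ψ j)

/-- Componentwise Laplacian. -/
def lap (f : V3 → Cl3) : V3 → Cl3 := fun x => ∑ i, pd i (pd i f) x

/-- `ν(a) = Σᵢ ψⁱ a ψⁱ`. -/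
def nu (ψ : Fin 3 → V3) (a : Cl3) : Cl3 := ∑ i, ι3 (ψ i) * a * ι3 (ψ i)

/-- `ω(a) = Σᵢ φⁱ a ψⁱ`. -/
def om (φ ψ : Fin 3 → V3) (a : Cl3) : Cl3 := ∑ i, ι3 (φ i) * a * ι3 (ψ i)

/-- `x_ψ = Σᵢ ψⁱ xᵢ`. -/
def xPsi (ψ : Fin 3 → V3) (x : V3) : Cl3 := ∑ i, x i • ι3 (ψ i)


lemma Q3_apply (v : V3) : Q3 v = -∑ i, v i * v i := by
  simp [Q3, QuadraticMap.weightedSumSquares_apply]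

def ee (i : Fin 3) : Cl3 := ι3 (Pi.single i 1)

lemma ee_sq (i : Fin 3) : ee i * ee i = -1 := by
  rw [ee, ι3, CliffordAlgebra.ι_sq_scalar, Q3_apply]
  have : ∑ j, (Pi.single i 1 : V3) j * (Pi.single i 1 : V3) j = 1 := by
    simp [Pi.single_apply]
  rw [this]
  simp

lemma ee_swap {i j : Fin 3} (h : i ≠ j) : ee i * ee j = -(ee j * ee i) := by
  have hp := CliffordAlgebra.ι_mul_ι_add_swap (Q := Q3) (Pi.single i 1) (Pi.single j 1)
  have hpol : QuadraticMap.polar Q3 (Pi.single i 1) (Pi.single j 1) = 0 := by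
    rw [QuadraticMap.polar, Q3_apply, Q3_apply, Q3_apply]
    have h1 : ∑ k, (Pi.single i 1 + Pi.single j 1 : V3) k * (Pi.single i 1 + Pi.single j 1 : V3) k = 2 := by
      have : ∀ k, (Pi.single i 1 + Pi.single j 1 : V3) k = (if k = i then 1 else 0) + (if k = j then 1 else 0) := by
        intro k; simp [Pi.single_apply, eq_comm]
      simp only [this]
      rw [Fin.sum_univ_three]
      fin_cases i <;> fin_cases j <;> simp_all <;> norm_num
    have h2 : ∑ k, (Pi.single i 1 : V3) k * (Pi.single i 1 : V3) k = 1 := by simp [Pi.single_apply]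
    have h3 : ∑ k, (Pi.single j 1 : V3) k * (Pi.single j 1 : V3) k = 1 := by simp [Pi.single_apply]
    rw [h1, h2, h3]; ring
  rw [hpol] at hp
  simp only [map_zero] at hp
  have := hp
  rw [ee, ee, ι3]
  linear_combination (norm := noncomm_ring) this

def gB : Fin 8 → Cl3
  | 0 => 1
  | 1 => ee 0
  | 2 => ee 1
  | 3 => ee 2
  | 4 => ee 0 * ee 1
  | 5 => ee 0 * ee 2
  | 6 => ee 1 * ee 2
  | 7 => ee 0 * (ee 1 * ee 2)

def SB : Submodule ℝ Cl3 := Submodule.span ℝ (Set.range gB)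

lemma mem_SB (i : Fin 8) : gB i ∈ SB := Submodule.subset_span ⟨i, rfl⟩


lemma ee_mul_mem (i : Fin 3) (k : Fin 8) : ee i * gB k ∈ SB := by
  have s0 := ee_sq 0; have s1 := ee_sq 1; have s2 := ee_sq 2
  have w10 : ee 1 * ee 0 = -(ee 0 * ee 1) := ee_swap (by decide)
  have w20 : ee 2 * ee 0 = -(ee 0 * ee 2) := ee_swap (by decide)
  have w21 : ee 2 * ee 1 = -(ee 1 * ee 2) := ee_swap (by decide)
  have s0' : ∀ x : Cl3, ee 0 * (ee 0 * x) = -x := by intro x; rw [← mul_assoc, s0]; simp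
  have s1' : ∀ x : Cl3, ee 1 * (ee 1 * x) = -x := by intro x; rw [← mul_assoc, s1]; simp
  have s2' : ∀ x : Cl3, ee 2 * (ee 2 * x) = -x := by intro x; rw [← mul_assoc, s2]; simp
  have w10' : ∀ x : Cl3, ee 1 * (ee 0 * x) = -(ee 0 * (ee 1 * x)) := by
    intro x; rw [← mul_assoc, w10]; simp [mul_assoc]
  have w20' : ∀ x : Cl3, ee 2 * (ee 0 * x) = -(ee 0 * (ee 2 * x)) := by
    intro x; rw [← mul_assoc, w20]; simp [mul_assoc]
  have w21' : ∀ x : Cl3, ee 2 * (ee 1 * x) = -(ee 1 * (ee 2 * x)) := by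
    intro x; rw [← mul_assoc, w21]; simp [mul_assoc]
  have m0 : (1 : Cl3) ∈ SB := mem_SB 0
  have m1 : ee 0 ∈ SB := mem_SB 1
  have m2 : ee 1 ∈ SB := mem_SB 2
  have m3 : ee 2 ∈ SB := mem_SB 3
  have m4 : ee 0 * ee 1 ∈ SB := mem_SB 4
  have m5 : ee 0 * ee 2 ∈ SB := mem_SB 5
  have m6 : ee 1 * ee 2 ∈ SB := mem_SB 6
  have m7 : ee 0 * (ee 1 * ee 2) ∈ SB := mem_SB 7
  fin_cases i <;> fin_cases k <;>
    simp [gB, mul_assoc, s0', s1', s2', w10', w20', w21',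
      s0, s1, s2, w10, w20, w21, mul_neg, neg_neg] <;>
    first
      | exact m0 | exact m1 | exact m2 | exact m3 | exact m4 | exact m5 | exact m6 | exact m7
      | exact neg_mem m0 | exact neg_mem m1 | exact neg_mem m2 | exact neg_mem m3
      | exact neg_mem m4 | exact neg_mem m5 | exact neg_mem m6 | exact neg_mem m7

lemma ee_mul_mem' (i : Fin 3) {x : Cl3} (hx : x ∈ SB) : ee i * x ∈ SB := by
  induction hx using Submodule.span_induction with
  | mem y hy => obtain ⟨k, rfl⟩ := hy; exact ee_mul_mem i k
  | zero => rw [mul_zero]; exact zero_mem SB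
  | add y z _ _ hy hz => rw [mul_add]; exact add_mem hy hz
  | smul r y _ hy => rw [mul_smul_comm]; exact Submodule.smul_mem _ _ hy

lemma iota_mul_mem (m : V3) {x : Cl3} (hx : x ∈ SB) : ι3 m * x ∈ SB := by
  have hm : ι3 m = ∑ i, m i • ee i := by
    have hmm : m = ∑ i, m i • (Pi.single i 1 : V3) := by
      ext j; simp [Pi.single_apply]
    conv_lhs => rw [hmm]
    simp [ee]
  rw [hm, Finset.sum_mul]
  exact Submodule.sum_mem _ fun i _ => by
    rw [smul_mul_assoc]; exact Submodule.smul_mem _ _ (ee_mul_mem' i hx)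

lemma SB_eq_top : SB = ⊤ := by
  rw [Submodule.eq_top_iff']
  intro x
  induction x using CliffordAlgebra.left_induction with
  | algebraMap r =>
      rw [Algebra.algebraMap_eq_smul_one]
      exact Submodule.smul_mem _ _ (mem_SB 0)
  | add y z hy hz => exact add_mem hy hz
  | ι_mul y m hy => exact iota_mul_mem m hy

instance : Module.Finite ℝ Cl3 := by
  classical
  rw [Module.finite_def]
  refine ⟨(Finset.univ.image gB), ?_⟩
  rw [Finset.coe_image, Finset.coe_univ, Set.image_univ]
  exact SB_eq_top

example : FiniteDimensional ℝ Cl3 := inferInstance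

-- ### Calculus toolkit
def mulLc (a : Cl3) : Cl3 →L[ℝ] Cl3 := LinearMap.toContinuousLinearMap (LinearMap.mulLeft ℝ a)
def mulRc (a : Cl3) : Cl3 →L[ℝ] Cl3 := LinearMap.toContinuousLinearMap (LinearMap.mulRight ℝ a)

@[simp] lemma mulLc_apply (a x : Cl3) : mulLc a x = a * x := rfl
@[simp] lemma mulRc_apply (a x : Cl3) : mulRc a x = x * a := rfl

lemma pd_clm {E F : Type*} [NormedAddCommGroup E] [NormedSpace ℝ E]
    [NormedAddCommGroup F] [NormedSpace ℝ F]
    (L : E →L[ℝ] F) {f : V3 → E} {x : V3} (hf : DifferentiableAt ℝ f x) (i : Fin 3) :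
    fderiv ℝ (fun y => L (f y)) x = L.comp (fderiv ℝ f x) := by
  have h : HasFDerivAt (fun y => L (f y)) (L.comp (fderiv ℝ f x)) x :=
    L.hasFDerivAt.comp x hf.hasFDerivAt
  exact h.fderiv

lemma pd_mulL {f : V3 → Cl3} {x : V3} (hf : DifferentiableAt ℝ f x) (a : Cl3) (i : Fin 3) :
    pd i (fun y => a * f y) x = a * pd i f x := by
  unfold pd
  have he : (fun y => a * f y) = (fun y => (mulLc a) (f y)) := rfl
  rw [he, pd_clm (mulLc a) hf i]; rfl

lemma pd_mulR {f : V3 → Cl3} {x : V3} (hf : DifferentiableAt ℝ f x) (a : Cl3) (i : Fin 3) :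
    pd i (fun y => f y * a) x = pd i f x * a := by
  unfold pd
  have he : (fun y => f y * a) = (fun y => (mulRc a) (f y)) := rfl
  rw [he, pd_clm (mulRc a) hf i]; rfl

lemma pd_sum {f : Fin 3 → V3 → Cl3} {x : V3} (hf : ∀ k, DifferentiableAt ℝ (f k) x) (i : Fin 3) :
    pd i (fun y => ∑ k, f k y) x = ∑ k, pd i (f k) x := by
  unfold pd
  rw [fderiv_fun_sum (fun k _ => hf k)]; simp

lemma pd_sub {f g : V3 → Cl3} {x : V3} (hf : DifferentiableAt ℝ f x)
    (hg : DifferentiableAt ℝ g x) (i : Fin 3) :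
    pd i (fun y => f y - g y) x = pd i f x - pd i g x := by
  unfold pd; rw [fderiv_fun_sub hf hg]; rfl

lemma pd_smul {f : V3 → Cl3} {x : V3} (hf : DifferentiableAt ℝ f x) (c : ℝ) (i : Fin 3) :
    pd i (fun y => c • f y) x = c • pd i f x := by
  unfold pd; rw [fderiv_fun_const_smul hf c]; rfl

lemma pd_congr {f g : V3 → Cl3} {x : V3} {Ω : Set V3} (hΩ : IsOpen Ω) (hx : x ∈ Ω)
    (h : ∀ y ∈ Ω, f y = g y) (i : Fin 3) : pd i f x = pd i g x := by
  unfold pd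
  have hev : f =ᶠ[nhds x] g := by
    filter_upwards [hΩ.mem_nhds hx] with y hy using h y hy
  rw [hev.fderiv_eq]

lemma pd_zero_of_eq_zero {f : V3 → Cl3} {x : V3} {Ω : Set V3} (hΩ : IsOpen Ω) (hx : x ∈ Ω)
    (h : ∀ y ∈ Ω, f y = 0) (i : Fin 3) : pd i f x = 0 := by
  rw [pd_congr hΩ hx h i]
  unfold pd
  rw [fderiv_const_apply]; rfl

lemma pd_contDiffOn {f : V3 → Cl3} {Ω : Set V3} (hΩ : IsOpen Ω) {m n : WithTop ℕ∞}
    (h : ContDiffOn ℝ n f Ω) (hmn : m + 1 ≤ n) (i : Fin 3) :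
    ContDiffOn ℝ m (pd i f) Ω :=
  (h.fderiv_of_isOpen hΩ hmn).clm_apply contDiffOn_const

lemma pd_diffAt {f : V3 → Cl3} {Ω : Set V3} (hΩ : IsOpen Ω) {x : V3} (hx : x ∈ Ω)
    {n : WithTop ℕ∞} (h : ContDiffOn ℝ n f Ω) (hn : (1:WithTop ℕ∞) + 1 ≤ n) (i : Fin 3) :
    DifferentiableAt ℝ (pd i f) x :=
  ((pd_contDiffOn hΩ h hn i).differentiableOn one_ne_zero).differentiableAt (hΩ.mem_nhds hx)

lemma pd_symm {f : V3 → Cl3} {x : V3} (h2 : ContDiffAt ℝ 2 f x) (i j : Fin 3) :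
    pd i (pd j f) x = pd j (pd i f) x := by
  have hdf : DifferentiableAt ℝ (fderiv ℝ f) x := by
    have := h2.fderiv_right (m := 1) (by norm_num)
    exact this.differentiableAt (by norm_num)
  have hs : IsSymmSndFDerivAt ℝ f x := h2.isSymmSndFDerivAt (by norm_num)
  have key : ∀ a b : Fin 3, pd a (pd b f) x
      = fderiv ℝ (fderiv ℝ f) x (Pi.single a 1) (Pi.single b 1) := by
    intro a b
    show fderiv ℝ (fun y => (ContinuousLinearMap.apply ℝ Cl3 ((Pi.single b 1 : V3))) (fderiv ℝ f y)) x (Pi.single a 1) = _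
    rw [pd_clm (ContinuousLinearMap.apply ℝ Cl3 ((Pi.single b 1 : V3))) hdf a]
    rfl
  rw [key i j, key j i, hs.eq]

-- ### Algebraic contraction lemmas
lemma contractR (b : Fin 3 → Cl3)
    (hb : ∀ i j, b i * b j + b j * b i = algebraMap ℝ Cl3 (if i = j then -2 else 0))
    (T : Fin 3 → Fin 3 → Cl3) (hT : ∀ j k, T j k = T k j) :
    ∑ j, ∑ k, T j k * (b k * b j) = -∑ j, T j j := by
  have key : (2:ℝ) • (∑ j, ∑ k, T j k * (b k * b j)) = (2:ℝ) • (-∑ j, T j j) := by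
    have swap : ∑ j, ∑ k, T j k * (b k * b j) = ∑ j, ∑ k, T j k * (b j * b k) := by
      rw [Finset.sum_comm]
      refine Finset.sum_congr rfl fun j _ => Finset.sum_congr rfl fun k _ => ?_
      rw [hT]
    calc (2:ℝ) • (∑ j, ∑ k, T j k * (b k * b j))
        = (∑ j, ∑ k, T j k * (b k * b j)) + ∑ j, ∑ k, T j k * (b j * b k) := by
          rw [two_smul, swap]
      _ = ∑ j, ∑ k, T j k * (b k * b j + b j * b k) := by
          rw [← Finset.sum_add_distrib]
          refine Finset.sum_congr rfl fun j _ => ?_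
          rw [← Finset.sum_add_distrib]
          exact Finset.sum_congr rfl fun k _ => (mul_add _ _ _).symm
      _ = ∑ j, ∑ k, T j k * algebraMap ℝ Cl3 (if k = j then -2 else 0) := by
          refine Finset.sum_congr rfl fun j _ => Finset.sum_congr rfl fun k _ => ?_
          rw [hb k j]
      _ = ∑ j, T j j * algebraMap ℝ Cl3 (-2) := by
          refine Finset.sum_congr rfl fun j _ => ?_
          rw [Finset.sum_eq_single j]
          · simp
          · intro k _ hk; simp [hk]
          · intro h; exact absurd (Finset.mem_univ j) h
      _ = (2:ℝ) • (-∑ j, T j j) := by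
          have hj : ∀ j : Fin 3, T j j * algebraMap ℝ Cl3 (-2) = (2:ℝ) • (-(T j j)) := by
            intro j
            rw [Algebra.algebraMap_eq_smul_one, mul_smul_comm, mul_one]
            module
          simp only [hj]
          rw [← Finset.smul_sum, ← Finset.sum_neg_distrib]
  exact smul_right_injective Cl3 (two_ne_zero) key

lemma contractL (b : Fin 3 → Cl3)
    (hb : ∀ i j, b i * b j + b j * b i = algebraMap ℝ Cl3 (if i = j then -2 else 0))
    (T : Fin 3 → Fin 3 → Cl3) (hT : ∀ j k, T j k = T k j) :
    ∑ j, ∑ k, b j * (b k * T j k) = -∑ j, T j j := by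
  have key : (2:ℝ) • (∑ j, ∑ k, b j * (b k * T j k)) = (2:ℝ) • (-∑ j, T j j) := by
    have swap : ∑ j, ∑ k, b j * (b k * T j k) = ∑ j, ∑ k, b k * (b j * T j k) := by
      rw [Finset.sum_comm]
      refine Finset.sum_congr rfl fun j _ => Finset.sum_congr rfl fun k _ => ?_
      rw [hT]
    calc (2:ℝ) • (∑ j, ∑ k, b j * (b k * T j k))
        = (∑ j, ∑ k, b j * (b k * T j k)) + ∑ j, ∑ k, b k * (b j * T j k) := by
          rw [two_smul, swap]
      _ = ∑ j, ∑ k, (b j * b k + b k * b j) * T j k := by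
          rw [← Finset.sum_add_distrib]
          refine Finset.sum_congr rfl fun j _ => ?_
          rw [← Finset.sum_add_distrib]
          refine Finset.sum_congr rfl fun k _ => ?_
          rw [add_mul, mul_assoc, mul_assoc]
      _ = ∑ j, ∑ k, algebraMap ℝ Cl3 (if j = k then -2 else 0) * T j k := by
          refine Finset.sum_congr rfl fun j _ => Finset.sum_congr rfl fun k _ => ?_
          rw [hb j k]
      _ = ∑ j, algebraMap ℝ Cl3 (-2) * T j j := by
          refine Finset.sum_congr rfl fun j _ => ?_
          rw [Finset.sum_eq_single j]
          · simp
          · intro k _ hk; simp [Ne.symm hk]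
          · intro h; exact absurd (Finset.mem_univ j) h
      _ = (2:ℝ) • (-∑ j, T j j) := by
          have hj : ∀ j : Fin 3, algebraMap ℝ Cl3 (-2) * T j j = (2:ℝ) • (-(T j j)) := by
            intro j
            rw [Algebra.algebraMap_eq_smul_one, smul_mul_assoc, one_mul]
            module
          simp only [hj]
          rw [← Finset.smul_sum, ← Finset.sum_neg_distrib]
  exact smul_right_injective Cl3 (two_ne_zero) key

lemma main_alg (a b : Fin 3 → Cl3)
    (hb : ∀ i j, b i * b j + b j * b i = algebraMap ℝ Cl3 (if i = j then -2 else 0))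
    (S : Fin 3 → Fin 3 → Fin 3 → Cl3) (hSjk : ∀ i j k, S i j k = S i k j)
    (α β c : ℝ) (hc : α * c = β)
    (hE : ∑ i, a i * (∑ j, S i j j) = 0) :
    α • (∑ i, ∑ j, (a i * ((∑ k, S i j k * b k) - c • ∑ k, b k * S i j k)) * b j)
      + β • (∑ i, a i * (∑ j, b j * ((∑ k, S i j k * b k) - c • ∑ k, b k * S i j k))) = 0 := by
  have hA1 : (∑ i, ∑ j, ∑ k, a i * (S i j k * (b k * b j))) = 0 := by
    have hi : ∀ i : Fin 3, (∑ j, ∑ k, a i * (S i j k * (b k * b j)))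
        = a i * -∑ j, S i j j := by
      intro i
      rw [← contractR b hb (fun j k => S i j k) (fun j k => hSjk i j k), Finset.mul_sum]
      exact Finset.sum_congr rfl fun j _ => by rw [Finset.mul_sum]
    simp only [hi, mul_neg]
    rw [Finset.sum_neg_distrib, hE, neg_zero]
  have hB2 : (∑ i, ∑ j, ∑ k, a i * (b j * (b k * S i j k))) = 0 := by
    have hi : ∀ i : Fin 3, (∑ j, ∑ k, a i * (b j * (b k * S i j k)))
        = a i * -∑ j, S i j j := by
      intro i
      rw [← contractL b hb (fun j k => S i j k) (fun j k => hSjk i j k), Finset.mul_sum]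
      exact Finset.sum_congr rfl fun j _ => by rw [Finset.mul_sum]
    simp only [hi, mul_neg]
    rw [Finset.sum_neg_distrib, hE, neg_zero]
  have hA2B1 : (∑ i, ∑ j, ∑ k, a i * (b k * (S i j k * b j)))
      = ∑ i, ∑ j, ∑ k, a i * (b j * (S i j k * b k)) := by
    refine Finset.sum_congr rfl fun i _ => ?_
    rw [Finset.sum_comm]
    exact Finset.sum_congr rfl fun j _ => Finset.sum_congr rfl fun k _ => by
      rw [hSjk i k j]
  have expand1 : ∀ i j : Fin 3,
      (a i * ((∑ k, S i j k * b k) - c • ∑ k, b k * S i j k)) * b j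
       = (∑ k, a i * (S i j k * (b k * b j))) - c • ∑ k, a i * (b k * (S i j k * b j)) := by
    intro i j
    rw [mul_sub, sub_mul, mul_smul_comm, smul_mul_assoc]
    congr 1
    · rw [Finset.mul_sum, Finset.sum_mul]
      exact Finset.sum_congr rfl fun k _ => by simp [mul_assoc]
    · congr 1
      rw [Finset.mul_sum, Finset.sum_mul]
      exact Finset.sum_congr rfl fun k _ => by simp [mul_assoc]
  have expand2 : ∀ i : Fin 3,
      a i * (∑ j, b j * ((∑ k, S i j k * b k) - c • ∑ k, b k * S i j k))
       = (∑ j, ∑ k, a i * (b j * (S i j k * b k)))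
          - c • ∑ j, ∑ k, a i * (b j * (b k * S i j k)) := by
    intro i
    have hj : ∀ j : Fin 3, b j * ((∑ k, S i j k * b k) - c • ∑ k, b k * S i j k)
        = (∑ k, b j * (S i j k * b k)) - c • ∑ k, b j * (b k * S i j k) := by
      intro j
      rw [mul_sub, mul_smul_comm, Finset.mul_sum, Finset.mul_sum]
    simp only [hj]
    rw [Finset.sum_sub_distrib, mul_sub, ← Finset.smul_sum, mul_smul_comm]
    congr 1
    · rw [Finset.mul_sum]
      exact Finset.sum_congr rfl fun j _ => by rw [Finset.mul_sum]
    · congr 1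
      rw [Finset.mul_sum]
      exact Finset.sum_congr rfl fun j _ => by rw [Finset.mul_sum]
  simp only [expand1, expand2]
  simp only [Finset.sum_sub_distrib, ← Finset.smul_sum]
  rw [hA1, hB2, hA2B1]
  simp [smul_smul, hc]

lemma dmulR {f : V3 → Cl3} {y : V3} (hf : DifferentiableAt ℝ f y) (a : Cl3) :
    DifferentiableAt ℝ (fun z => f z * a) y :=
  (mulRc a).differentiableAt.comp y hf

lemma dmulL {f : V3 → Cl3} {y : V3} (hf : DifferentiableAt ℝ f y) (a : Cl3) :
    DifferentiableAt ℝ (fun z => a * f z) y :=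
  (mulLc a).differentiableAt.comp y hf

theorem stmt16' (φ ψ : Fin 3 → V3) (hφ : StructuralSet φ) (hψ : StructuralSet ψ)
    (α β : ℝ) (hα : α ≠ 0) (hαβ : α ^ 2 ≠ β ^ 2)
    (Ω : Set V3) (hΩ : IsOpen Ω) (u : V3 → Cl3) (hu : ContDiffOn ℝ 3 u Ω)
    (hcase : (∀ x ∈ Ω, lap u x = 0) ∨ (∀ x ∈ Ω, DLR φ ψ u x = 0))
    (w : V3 → Cl3) (hw : w = fun x => DR ψ u x - (β / α) • DL ψ u x) :
    ∀ x ∈ Ω, α • DLR φ ψ w x + β • DL φ (DL ψ w) x = 0 := by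
  intro x hx
  set c : ℝ := β / α with hcdef
  have hc : α * c = β := by rw [hcdef]; field_simp
  set a : Fin 3 → Cl3 := fun i => ι3 (φ i) with ha
  set b : Fin 3 → Cl3 := fun i => ι3 (ψ i) with hbdef
  set S : Fin 3 → Fin 3 → Fin 3 → Cl3 := fun i j k => pd i (pd j (pd k u)) x with hS
  -- smoothness
  have C2 : ∀ k, ContDiffOn ℝ 2 (pd k u) Ω := fun k => pd_contDiffOn hΩ hu (by norm_num) k
  have C1 : ∀ j k, ContDiffOn ℝ 1 (pd j (pd k u)) Ω := fun j k =>
    pd_contDiffOn hΩ (C2 k) (by norm_num) j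
  have D1 : ∀ y, y ∈ Ω → ∀ k, DifferentiableAt ℝ (pd k u) y := fun y hy k =>
    (((C2 k).differentiableOn (by norm_num)).differentiableAt (hΩ.mem_nhds hy))
  have D2 : ∀ y, y ∈ Ω → ∀ j k, DifferentiableAt ℝ (pd j (pd k u)) y := fun y hy j k =>
    (((C1 j k).differentiableOn one_ne_zero).differentiableAt (hΩ.mem_nhds hy))
  -- symmetry of derivatives
  have hS2 : ∀ i j k, S i j k = S i k j := by
    intro i j k
    exact pd_congr hΩ hx (fun y hy =>
      pd_symm ((hu.contDiffAt (hΩ.mem_nhds hy)).of_le (by norm_num)) j k) i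
  have hS1 : ∀ i j k, S i j k = S j i k := fun i j k =>
    pd_symm ((C2 k).contDiffAt (hΩ.mem_nhds hx)) i j
  -- first derivatives of w on Ω
  have dDR : ∀ y, y ∈ Ω → DifferentiableAt ℝ (DR ψ u) y := fun y hy =>
    DifferentiableAt.fun_sum (fun k _ => dmulR (D1 y hy k) (ι3 (ψ k)))
  have dDL : ∀ y, y ∈ Ω → DifferentiableAt ℝ (DL ψ u) y := fun y hy =>
    DifferentiableAt.fun_sum (fun k _ => dmulL (D1 y hy k) (ι3 (ψ k)))
  have pdDR : ∀ j y, y ∈ Ω → pd j (DR ψ u) y = ∑ k, pd j (pd k u) y * b k := by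
    intro j y hy
    calc pd j (DR ψ u) y
        = ∑ k, pd j (fun z => pd k u z * b k) y :=
          pd_sum (f := fun k z => pd k u z * b k) (fun k => dmulR (D1 y hy k) (b k)) j
      _ = ∑ k, pd j (pd k u) y * b k :=
          Finset.sum_congr rfl fun k _ => pd_mulR (D1 y hy k) (b k) j
  have pdDL : ∀ j y, y ∈ Ω → pd j (DL ψ u) y = ∑ k, b k * pd j (pd k u) y := by
    intro j y hy
    calc pd j (DL ψ u) y
        = ∑ k, pd j (fun z => b k * pd k u z) y :=
          pd_sum (f := fun k z => b k * pd k u z) (fun k => dmulL (D1 y hy k) (b k)) j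
      _ = ∑ k, b k * pd j (pd k u) y :=
          Finset.sum_congr rfl fun k _ => pd_mulL (D1 y hy k) (b k) j
  have pdw : ∀ j y, y ∈ Ω →
      pd j w y = (∑ k, pd j (pd k u) y * b k) - c • ∑ k, b k * pd j (pd k u) y := by
    intro j y hy
    have h1 : pd j w y = pd j (DR ψ u) y - pd j (fun z => c • DL ψ u z) y := by
      rw [hw]
      exact pd_sub (f := fun z => DR ψ u z) (g := fun z => c • DL ψ u z)
        (dDR y hy) ((dDL y hy).const_smul c) j
    rw [h1, pdDR j y hy, pd_smul (dDL y hy) c j, pdDL j y hy]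
  -- the auxiliary function G j
  set G : Fin 3 → V3 → Cl3 :=
    fun j z => (∑ k, pd j (pd k u) z * b k) - c • ∑ k, b k * pd j (pd k u) z with hG
  have dG1 : ∀ j y, y ∈ Ω → DifferentiableAt ℝ (fun z => ∑ k, pd j (pd k u) z * b k) y :=
    fun j y hy => DifferentiableAt.fun_sum (fun k _ => dmulR (D2 y hy j k) (b k))
  have dG2 : ∀ j y, y ∈ Ω → DifferentiableAt ℝ (fun z => ∑ k, b k * pd j (pd k u) z) y :=
    fun j y hy => DifferentiableAt.fun_sum (fun k _ => dmulL (D2 y hy j k) (b k))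
  have dG : ∀ j y, y ∈ Ω → DifferentiableAt ℝ (G j) y := fun j y hy =>
    (dG1 j y hy).sub ((dG2 j y hy).const_smul c)
  have pdG : ∀ i j, pd i (G j) x = (∑ k, S i j k * b k) - c • ∑ k, b k * S i j k := by
    intro i j
    have h1 : pd i (G j) x
        = pd i (fun z => ∑ k, pd j (pd k u) z * b k) x
          - pd i (fun z => c • ∑ k, b k * pd j (pd k u) z) x :=
      pd_sub (f := fun z => ∑ k, pd j (pd k u) z * b k)
        (g := fun z => c • ∑ k, b k * pd j (pd k u) z)
        (dG1 j x hx) ((dG2 j x hx).const_smul c) i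
    rw [h1, pd_smul (dG2 j x hx) c i]
    congr 1
    · calc pd i (fun z => ∑ k, pd j (pd k u) z * b k) x
          = ∑ k, pd i (fun z => pd j (pd k u) z * b k) x :=
            pd_sum (f := fun k z => pd j (pd k u) z * b k)
              (fun k => dmulR (D2 x hx j k) (b k)) i
        _ = ∑ k, S i j k * b k :=
            Finset.sum_congr rfl fun k _ => by
              rw [pd_mulR (D2 x hx j k) (b k) i]
    · congr 1
      calc pd i (fun z => ∑ k, b k * pd j (pd k u) z) x
          = ∑ k, pd i (fun z => b k * pd j (pd k u) z) x :=
            pd_sum (f := fun k z => b k * pd j (pd k u) z)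
              (fun k => dmulL (D2 x hx j k) (b k)) i
        _ = ∑ k, b k * S i j k :=
            Finset.sum_congr rfl fun k _ => by
              rw [pd_mulL (D2 x hx j k) (b k) i]
  have pdd : ∀ i j, pd i (pd j w) x = (∑ k, S i j k * b k) - c • ∑ k, b k * S i j k := by
    intro i j
    rw [pd_congr hΩ hx (fun y hy => (pdw j y hy)) i]
    exact pdG i j
  -- E = 0
  have hE : ∑ i, a i * (∑ j, S i j j) = 0 := by
    rcases hcase with hh | hm
    · have hli : ∀ i, (∑ j, S i j j) = 0 := by
        intro i
        have h0 : pd i (lap u) x = 0 := pd_zero_of_eq_zero hΩ hx hh i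
        have h1 : pd i (lap u) x = ∑ j, S i j j :=
          pd_sum (f := fun j z => pd j (pd j u) z) (fun j => D2 x hx j j) i
        rw [← h1, h0]
      simp [hli]
    · have h0 : ∀ j, pd j (DLR φ ψ u) x = 0 := fun j =>
        pd_zero_of_eq_zero hΩ hx hm j
      have hpdDLR : ∀ j, pd j (DLR φ ψ u) x = ∑ i, ∑ k, a i * S j i k * b k := by
        intro j
        calc pd j (DLR φ ψ u) x
            = ∑ i, pd j (fun z => ∑ k, a i * pd i (pd k u) z * b k) x :=
              pd_sum (f := fun i z => ∑ k, a i * pd i (pd k u) z * b k)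
                (fun i => DifferentiableAt.fun_sum
                  (fun k _ => dmulR (dmulL (D2 x hx i k) (a i)) (b k))) j
          _ = ∑ i, ∑ k, pd j (fun z => a i * pd i (pd k u) z * b k) x :=
              Finset.sum_congr rfl fun i _ =>
                pd_sum (f := fun k z => a i * pd i (pd k u) z * b k)
                  (fun k => dmulR (dmulL (D2 x hx i k) (a i)) (b k)) j
          _ = ∑ i, ∑ k, a i * S j i k * b k := by
              refine Finset.sum_congr rfl fun i _ => Finset.sum_congr rfl fun k _ => ?_
              rw [pd_mulR (dmulL (D2 x hx i k) (a i)) (b k) j,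
                pd_mulL (D2 x hx i k) (a i) j]
      have hzero : ∑ j, (∑ i, ∑ k, a i * S j i k * b k) * b j = 0 := by
        refine Finset.sum_eq_zero fun j _ => ?_
        rw [← hpdDLR j, h0 j, zero_mul]
      have htrans : ∑ j, (∑ i, ∑ k, a i * S j i k * b k) * b j
          = ∑ i, a i * -∑ j, S i j j := by
        calc ∑ j, (∑ i, ∑ k, a i * S j i k * b k) * b j
            = ∑ j, ∑ i, ∑ k, a i * (S i j k * (b k * b j)) := by
              refine Finset.sum_congr rfl fun j _ => ?_
              rw [Finset.sum_mul]
              refine Finset.sum_congr rfl fun i _ => ?_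
              rw [Finset.sum_mul]
              refine Finset.sum_congr rfl fun k _ => ?_
              rw [← hS1 i j k, mul_assoc, mul_assoc]
          _ = ∑ i, ∑ j, ∑ k, a i * (S i j k * (b k * b j)) := Finset.sum_comm
          _ = ∑ i, a i * -∑ j, S i j j := by
              refine Finset.sum_congr rfl fun i _ => ?_
              rw [← contractR b hψ (fun j k => S i j k) (fun j k => hS2 i j k),
                Finset.mul_sum]
              exact Finset.sum_congr rfl fun j _ => by rw [Finset.mul_sum]
      have : ∑ i, a i * -∑ j, S i j j = 0 := by rw [← htrans, hzero]
      simpa [mul_neg, Finset.sum_neg_distrib, neg_eq_zero] using this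
  -- final computation
  have hDLR : DLR φ ψ w x
      = ∑ i, ∑ j, (a i * ((∑ k, S i j k * b k) - c • ∑ k, b k * S i j k)) * b j := by
    refine Finset.sum_congr rfl fun i _ => Finset.sum_congr rfl fun j _ => ?_
    rw [pdd i j]
  have hDLDL : DL φ (DL ψ w) x
      = ∑ i, a i * (∑ j, b j * ((∑ k, S i j k * b k) - c • ∑ k, b k * S i j k)) := by
    refine Finset.sum_congr rfl fun i _ => ?_
    congr 1
    calc pd i (DL ψ w) x
        = pd i (fun z => ∑ j, b j * G j z) x := by
          refine pd_congr hΩ hx (fun y hy => ?_) i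
          show ∑ j, b j * pd j w y = _
          exact Finset.sum_congr rfl fun j _ => by rw [pdw j y hy]
      _ = ∑ j, pd i (fun z => b j * G j z) x :=
          pd_sum (f := fun j z => b j * G j z) (fun j => dmulL (dG j x hx) (b j)) i
      _ = ∑ j, b j * ((∑ k, S i j k * b k) - c • ∑ k, b k * S i j k) :=
          Finset.sum_congr rfl fun j _ => by
            rw [pd_mulL (dG j x hx) (b j) i, pdG i j]
  rw [hDLR, hDLDL]
  exact main_alg a b hψ S hS2 α β c hc hE

/-- if `u` is harmonic or `(φ,ψ)`-inframonogenic, then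
`w = uψ∂ - (β/α)ψ∂u` solves `α(φ∂ w ψ∂) + β(φ∂ψ∂ w) = 0`. -/
theorem stmt16 (φ ψ : Fin 3 → V3) (hφ : StructuralSet φ) (hψ : StructuralSet ψ)
    (α β : ℝ) (hα : α ≠ 0) (hαβ : α ^ 2 ≠ β ^ 2)
    (Ω : Set V3) (hΩ : IsOpen Ω) (u : V3 → Cl3) (hu : ContDiffOn ℝ 3 u Ω)
    (hcase : (∀ x ∈ Ω, lap u x = 0) ∨ (∀ x ∈ Ω, DLR φ ψ u x = 0))
    (w : V3 → Cl3) (hw : w = fun x => DR ψ u x - (β / α) • DL ψ u x) :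
    ∀ x ∈ Ω, α • DLR φ ψ w x + β • DL φ (DL ψ w) x = 0 :=
  stmt16' φ ψ hφ hψ α β hα hαβ Ω hΩ u hu hcase w hw
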